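/- Let D be an integral domain and ⋆ a semistar operation on D such that D is a ⋆-domain. If D^⋆ is flat as a D-module, then D is a ((⋆̄)_f, ⋆_f)-domain. -/

import Mathlib

open Submodule

namespace Semistar

/-- A semistar operation on an integral domain `D` with quotient field `K`:
a map on `D`-submodules of `K` satisfying the semistar axioms on nonzero submodules. -/
structure SemistarOp (D K : Type*) [CommRing D] [Field K] [Algebra D K] where
  star : Submodule D K → Submodule D K
  star_smul_mul : ∀ x : K, x ≠ 0 → ∀ E : Submodule D K, E ≠ ⊥ →
    star (span D {x} * E) = span D {x} * star E
  star_mono : ∀ E F : Submodule D K, E ≠ ⊥ → F ≠ ⊥ → E ≤ F → star E ≤ star F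
  le_star : ∀ E : Submodule D K, E ≠ ⊥ → E ≤ star E
  star_star : ∀ E : Submodule D K, E ≠ ⊥ → star (star E) = star E

variable {D K : Type*} [CommRing D] [Field K] [Algebra D K]

/-- The finite-type semistar operation `⋆_f` associated to `⋆`. -/
def finStar (t : Submodule D K → Submodule D K) : Submodule D K → Submodule D K :=
  fun E => ⨆ F ∈ {F : Submodule D K | F ≠ ⊥ ∧ F.FG ∧ F ≤ E}, t F

/-- The image in `K` of an ideal of `D`. -/
def idealToK (I : Ideal D) : Submodule D K :=
  Submodule.map (Algebra.linearMap D K) I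

/-- `I` is a quasi-`⋆`-ideal: a nonzero ideal of `D` with `I^⋆ ∩ D = I`. -/
def IsQuasiIdeal (t : Submodule D K → Submodule D K) (I : Ideal D) : Prop :=
  I ≠ ⊥ ∧ t (idealToK I) ⊓ 1 = idealToK I

/-- `M` is a quasi-`⋆`-maximal ideal: maximal among quasi-`⋆`-ideals. -/
def IsQuasiMaximal (t : Submodule D K → Submodule D K) (M : Ideal D) : Prop :=
  IsQuasiIdeal t M ∧ ∀ J : Ideal D, IsQuasiIdeal t J → M ≤ J → M = J

/-- The localization `E·D_M` of a submodule `E` of `K` at (the complement of) an ideal `M`. -/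
def locAt (M : Ideal D) (E : Submodule D K) : Submodule D K where
  carrier := {x : K | ∃ s ∈ Submonoid.closure ((M : Set D)ᶜ), s • x ∈ E}
  add_mem' := by
    rintro x y ⟨s, hs, hsx⟩ ⟨t, ht, hty⟩
    refine ⟨s * t, mul_mem hs ht, ?_⟩
    have h1 : (s * t) • x ∈ E := by rw [mul_comm, mul_smul]; exact E.smul_mem t hsx
    have h2 : (s * t) • y ∈ E := by rw [mul_smul]; exact E.smul_mem s hty
    rw [smul_add]; exact E.add_mem h1 h2
  zero_mem' := ⟨1, Submonoid.one_mem _, by simp⟩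
  smul_mem' := by
    rintro c x ⟨s, hs, hsx⟩
    exact ⟨s, hs, by rw [smul_comm]; exact E.smul_mem c hsx⟩

/-- The spectral semistar operation `⋆̃` associated to `⋆`, defined by
`E^⋆̃ = ⋂ { E·D_M : M quasi-`⋆_f`-maximal }`. -/
def tildeStar (s : SemistarOp D K) : Submodule D K → Submodule D K :=
  fun E => ⨅ M ∈ {M : Ideal D | IsQuasiMaximal (finStar s.star) M}, locAt M E

/-- The localizing system `F^⋆` of ideals `I` with `I^⋆ = D^⋆`. -/
def starLS (s : SemistarOp D K) : Set (Ideal D) :=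
  {I : Ideal D | I ≠ ⊥ ∧ s.star (idealToK I) = s.star 1}

/-- The stable semistar operation `⋆̄` associated to `⋆`:
`E^⋆̄ = ⋃ {(E : J) : J ∈ F^⋆}`. -/
def barStar (s : SemistarOp D K) : Submodule D K → Submodule D K :=
  fun E => ⨆ J ∈ starLS s, E / idealToK J

/-- `I` is `⋆`-invertible: `(I·I⁻¹)^⋆ = D^⋆`. -/
def IsStarInvertible (t : Submodule D K → Submodule D K) (I : Submodule D K) : Prop :=
  t (I * (1 / I)) = t 1

/-- `D` is a `⋆`-domain: every nonzero finitely generated `D`-submodule of `K`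
is `⋆`-invertible. -/
def IsStarDomain (t : Submodule D K → Submodule D K) : Prop :=
  ∀ I : Submodule D K, I ≠ ⊥ → I.FG → IsStarInvertible t I

/-- `D` is a Prüfer `⋆`-multiplication domain: every nonzero finitely generated
ideal of `D` is `⋆_f`-invertible. -/
def IsPMD (t : Submodule D K → Submodule D K) : Prop :=
  ∀ I : Submodule D K, I ≠ ⊥ → I.FG → I ≤ 1 → IsStarInvertible (finStar t) I

/-- `D` is a P⋆MD for the semistar operation `s`. -/
abbrev IsPStarMD (s : SemistarOp D K) : Prop := IsPMD s.star

/-- Equality of two semistar operations (as maps on nonzero submodules):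
`D` is a `(∗₁, ∗₂)`-domain. -/
def StarEq (t₁ t₂ : Submodule D K → Submodule D K) : Prop :=
  ∀ E : Submodule D K, E ≠ ⊥ → t₁ E = t₂ E

/-- `⋆` is a.b. -/
def IsAB (t : Submodule D K → Submodule D K) : Prop :=
  ∀ E : Submodule D K, E ≠ ⊥ → E.FG → ∀ F G : Submodule D K, F ≠ ⊥ → G ≠ ⊥ →
    t (E * F) ≤ t (E * G) → t F ≤ t G

/-- `⋆` is e.a.b. -/
def IsEAB (t : Submodule D K → Submodule D K) : Prop :=
  ∀ E F G : Submodule D K, E ≠ ⊥ → E.FG → F ≠ ⊥ → F.FG → G ≠ ⊥ → G.FG →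
    t (E * F) ≤ t (E * G) → t F ≤ t G

/-- `D` is quasi-`⋆`-integrally closed: `D^⋆ = ⋃ {(F^⋆ : F^⋆) : F ∈ f(D)}`. -/
def IsQuasiStarIntegrallyClosed (t : Submodule D K → Submodule D K) : Prop :=
  (t 1 : Set K) = ⋃ F ∈ {F : Submodule D K | F ≠ ⊥ ∧ F.FG}, ((t F / t F : Submodule D K) : Set K)

/-- The submodule `S` of `K` is integrally closed in `K`. -/
def IsIntegrallyClosedIn (S : Submodule D K) : Prop :=
  ∀ x : K, (∃ p : Polynomial K, p.Monic ∧ (∀ i, p.coeff i ∈ S) ∧ Polynomial.eval x p = 0) → x ∈ S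

/-- `D` is `⋆`-Noetherian: ACC on quasi-`⋆`-ideals. -/
def IsStarNoetherian (t : Submodule D K → Submodule D K) : Prop :=
  ∀ c : ℕ → Ideal D, (∀ n, IsQuasiIdeal t (c n)) → Monotone c →
    ∃ n, ∀ m, n ≤ m → c m = c n

/-- `D` is `⋆`-extracoherent. -/
def IsExtraCoherent (t : Submodule D K → Submodule D K) : Prop :=
  ∀ E F : Submodule D K, E ≠ ⊥ → E.FG → F ≠ ⊥ → F.FG → E ⊓ F ≠ ⊥ →
    ∃ J : Submodule D K, J ≠ ⊥ ∧ J.FG ∧ J ≤ E ⊓ F ∧ t J = t E ⊓ t F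

/-- `D` is truly `⋆`-coherent. -/
def IsTrulyCoherent (t : Submodule D K → Submodule D K) : Prop :=
  ∀ E F : Submodule D K, E ≠ ⊥ → E.FG → F ≠ ⊥ → F.FG → E ⊓ F ≠ ⊥ →
    ∃ J : Submodule D K, J ≠ ⊥ ∧ J.FG ∧ t J = t (E ⊓ F)

/-- `D` is `⋆`-coherent. -/
def IsCoherent (t : Submodule D K → Submodule D K) : Prop :=
  ∀ E F : Submodule D K, E ≠ ⊥ → E.FG → F ≠ ⊥ → F.FG → E ⊓ F ≠ ⊥ →
    ∃ J : Submodule D K, J ≠ ⊥ ∧ J.FG ∧ t J = t E ⊓ t F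

/-- `D` is `⋆`-quasi-coherent. -/
def IsQuasiCoherent (t : Submodule D K → Submodule D K) : Prop :=
  ∀ F : Submodule D K, F ≠ ⊥ → F.FG →
    ∃ G : Submodule D K, G ≠ ⊥ ∧ G.FG ∧ t ((1 : Submodule D K) / F) = t G

/-- `D` is an `H(⋆)`-domain. -/
def IsHDomain (t : Submodule D K → Submodule D K) : Prop :=
  ∀ I : Ideal D, I ≠ ⊥ → t (idealToK I) = t 1 →
    ∃ J : Ideal D, J ≠ ⊥ ∧ J.FG ∧ J ≤ I ∧ t (idealToK J) = t 1

/-- `D` is an `I(⋆)`-domain. -/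
def IsIDomain (s : SemistarOp D K) : Prop :=
  ∀ I : Submodule D K, I ≠ ⊥ → I.FG → I ≤ 1 →
    (IsStarInvertible s.star I ↔ IsStarInvertible (finStar s.star) I)


set_option linter.unusedSectionVars false
set_option linter.unnecessarySimpa false

section Aux

variable [IsDomain D] [IsFractionRing D K]

lemma mem_idealToK {J : Ideal D} {y : K} :
    y ∈ (idealToK J : Submodule D K) ↔ ∃ d ∈ J, algebraMap D K d = y := by
  simp [idealToK]

lemma one_ne_bot' : (1 : Submodule D K) ≠ ⊥ := by
  intro h
  have h1 : (1 : K) ∈ (1 : Submodule D K) := Submodule.one_le.mp le_rfl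
  rw [h, Submodule.mem_bot] at h1
  exact one_ne_zero h1

lemma mul_ne_bot {A B : Submodule D K} (hA : A ≠ ⊥) (hB : B ≠ ⊥) : A * B ≠ ⊥ := by
  obtain ⟨a, haA, ha⟩ := A.ne_bot_iff.mp hA
  obtain ⟨b, hbB, hb⟩ := B.ne_bot_iff.mp hB
  exact (A * B).ne_bot_iff.mpr ⟨a * b, Submodule.mul_mem_mul haA hbB, mul_ne_zero ha hb⟩

lemma span_singleton_ne_bot {x : K} (hx : x ≠ 0) : (span D {x}) ≠ ⊥ := by
  simp [Submodule.span_singleton_eq_bot, hx]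

lemma ne_bot_of_le {A B : Submodule D K} (hA : A ≠ ⊥) (h : A ≤ B) : B ≠ ⊥ := by
  obtain ⟨a, haA, ha⟩ := A.ne_bot_iff.mp hA
  exact B.ne_bot_iff.mpr ⟨a, h haA, ha⟩

lemma star_ne_bot (s : SemistarOp D K) {B : Submodule D K} (hB : B ≠ ⊥) : s.star B ≠ ⊥ :=
  ne_bot_of_le hB (s.le_star B hB)

lemma idealToK_le_one (J : Ideal D) : (idealToK J : Submodule D K) ≤ 1 := by
  intro y hy
  obtain ⟨d, _, rfl⟩ := mem_idealToK.mp hy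
  exact Submodule.mem_one.mpr ⟨d, rfl⟩

lemma idealToK_ne_bot {J : Ideal D} (hJ : J ≠ ⊥) : (idealToK J : Submodule D K) ≠ ⊥ := by
  obtain ⟨d, hdJ, hd⟩ := J.ne_bot_iff.mp hJ
  refine (idealToK J).ne_bot_iff.mpr ⟨algebraMap D K d, mem_idealToK.mpr ⟨d, hdJ, rfl⟩, ?_⟩
  simpa [IsFractionRing.to_map_eq_zero_iff] using hd

lemma mul_star_le (s : SemistarOp D K) {A B : Submodule D K} (hA : A ≠ ⊥) (hB : B ≠ ⊥) :
    A * s.star B ≤ s.star (A * B) := by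
  rw [Submodule.mul_le]
  intro a haA b hbB
  rcases eq_or_ne a 0 with rfl | ha
  · simpa using (s.star (A * B)).zero_mem
  have h1 : a * b ∈ span D {a} * s.star B :=
    Submodule.mul_mem_mul (Submodule.mem_span_singleton_self a) hbB
  rw [← s.star_smul_mul a ha B hB] at h1
  refine s.star_mono _ _ (mul_ne_bot (span_singleton_ne_bot ha) hB) (mul_ne_bot hA hB)
    (mul_le_mul' (Submodule.span_le.mpr (by simpa using haA)) le_rfl) h1

lemma exists_ne_zero_mem_one_div {F : Submodule D K} (hFG : F.FG) :
    ∃ y : K, y ∈ ((1 : Submodule D K) / F) ∧ y ≠ 0 := by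
  obtain ⟨S, hS⟩ := hFG
  obtain ⟨b, hb⟩ := IsLocalization.exist_integer_multiples_of_finset
    (nonZeroDivisors D) (S : Finset K)
  refine ⟨algebraMap D K (b : D), ?_, by
    simpa [IsFractionRing.to_map_eq_zero_iff] using nonZeroDivisors.coe_ne_zero b⟩
  rw [Submodule.mem_div_iff_forall_mul_mem]
  intro z hz
  have hle : F ≤ Submodule.comap (LinearMap.mulLeft D (algebraMap D K (b : D)))
      (1 : Submodule D K) := by
    rw [← hS, Submodule.span_le]
    intro a haS
    obtain ⟨c, hc⟩ := hb a haS
    simp only [SetLike.mem_coe, Submodule.mem_comap, LinearMap.mulLeft_apply]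
    exact Submodule.mem_one.mpr ⟨c, by rwa [Algebra.smul_def] at hc⟩
  simpa using hle hz


lemma one_mem_star_one (s : SemistarOp D K) : (1 : K) ∈ s.star 1 :=
  s.le_star 1 one_ne_bot' (Submodule.one_le.mp le_rfl)

lemma richman (s : SemistarOp D K) (hflat : Module.Flat D ↥(s.star 1)) {t : K}
    (ht : t ∈ s.star 1) :
    ∃ J : Ideal D, J ≠ ⊥ ∧ (∀ d ∈ J, algebraMap D K d * t ∈ (1 : Submodule D K)) ∧
      (1 : K) ∈ idealToK J * s.star 1 := by
  haveI := hflat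
  obtain ⟨⟨a, b⟩, hab⟩ := IsLocalization.surj (nonZeroDivisors D) t
  simp only at hab
  have hb0 : (b : D) ≠ 0 := nonZeroDivisors.coe_ne_zero b
  have hbK : algebraMap D K (b : D) ≠ 0 := by
    simpa [IsFractionRing.to_map_eq_zero_iff] using hb0
  set J : Ideal D := (Ideal.span {(b : D)}).colon (Ideal.span {a}) with hJdef
  have hmemJ : ∀ d : D, d ∈ J ↔ d * a ∈ Ideal.span {(b : D)} := fun d =>
    Ideal.mem_colon_span_singleton
  refine ⟨J, ?_, ?_, ?_⟩
  · intro hbot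
    have : (b : D) ∈ J := (hmemJ _).mpr (Ideal.mem_span_singleton.mpr ⟨a, rfl⟩)
    rw [hbot, Submodule.mem_bot] at this
    exact hb0 this
  · intro d hd
    obtain ⟨c, hc⟩ := Ideal.mem_span_singleton.mp ((hmemJ d).mp hd)
    refine Submodule.mem_one.mpr ⟨c, ?_⟩
    have heq : (algebraMap D K d * t) * algebraMap D K (b : D) =
        algebraMap D K c * algebraMap D K (b : D) := by
      calc (algebraMap D K d * t) * algebraMap D K (b : D)
          = algebraMap D K d * (t * algebraMap D K (b : D)) := by ring
        _ = algebraMap D K d * algebraMap D K a := by rw [hab]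
        _ = algebraMap D K (d * a) := by rw [map_mul]
        _ = algebraMap D K ((b : D) * c) := by rw [hc]
        _ = algebraMap D K c * algebraMap D K (b : D) := by rw [map_mul]; ring
    exact (mul_right_cancel₀ hbK heq).symm
  · -- flatness part
    set M := ↥(s.star 1)
    set I : Ideal D := Ideal.span {(b : D)} with hIdef
    set f : J →ₗ[D] D := J.subtype with hfdef
    set g : D →ₗ[D] (D ⧸ I) := I.mkQ ∘ₗ (a • LinearMap.id) with hgdef
    have hexact : Function.Exact f g := by
      rw [LinearMap.exact_iff]
      ext d
      simp only [LinearMap.mem_ker, hgdef, LinearMap.comp_apply, LinearMap.smul_apply,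
        LinearMap.id_coe, id_eq, Submodule.mkQ_apply, Submodule.Quotient.mk_eq_zero,
        smul_eq_mul, hfdef, Submodule.range_subtype]
      rw [hmemJ d, mul_comm]
    have htex := Module.Flat.lTensor_exact M hexact
    have h1mem : (1 : K) ∈ s.star 1 := one_mem_star_one s
    set o : M := ⟨1, h1mem⟩
    set τ : M := ⟨t, ht⟩
    have hzero : (g.lTensor M) (o ⊗ₜ[D] (1 : D)) = 0 := by
      have h1 : (g.lTensor M) (o ⊗ₜ[D] (1 : D)) = o ⊗ₜ[D] (Submodule.Quotient.mk a) := by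
        simp [hgdef]
      have h2 : o ⊗ₜ[D] (Submodule.Quotient.mk a : D ⧸ I) =
          τ ⊗ₜ[D] (Submodule.Quotient.mk (b : D)) := by
        have hao : a • o = (b : D) • τ := by
          apply Subtype.ext
          show a • (1 : K) = (b : D) • t
          rw [Algebra.smul_def, Algebra.smul_def, mul_one, mul_comm, hab]
        calc o ⊗ₜ[D] (Submodule.Quotient.mk a : D ⧸ I)
            = o ⊗ₜ[D] (a • (Submodule.Quotient.mk (1 : D) : D ⧸ I)) := by
              rw [← Submodule.Quotient.mk_smul, smul_eq_mul, mul_one]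
          _ = (a • o) ⊗ₜ[D] (Submodule.Quotient.mk (1 : D) : D ⧸ I) :=
              (TensorProduct.smul_tmul _ _ _).symm
          _ = ((b : D) • τ) ⊗ₜ[D] (Submodule.Quotient.mk (1 : D) : D ⧸ I) := by rw [hao]
          _ = τ ⊗ₜ[D] ((b : D) • (Submodule.Quotient.mk (1 : D) : D ⧸ I)) :=
              TensorProduct.smul_tmul _ _ _
          _ = τ ⊗ₜ[D] (Submodule.Quotient.mk (b : D) : D ⧸ I) := by
              rw [← Submodule.Quotient.mk_smul, smul_eq_mul, mul_one]
      have h3 : (Submodule.Quotient.mk (b : D) : D ⧸ I) = 0 :=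
        (Submodule.Quotient.mk_eq_zero I).mpr (Ideal.mem_span_singleton_self _)
      rw [h1, h2, h3, TensorProduct.tmul_zero]
    obtain ⟨z, hz⟩ := (htex _).mp hzero
    set e : TensorProduct D M D →ₗ[D] K :=
      (s.star 1).subtype ∘ₗ (TensorProduct.rid D M).toLinearMap with hedef
    have hrange : ∀ w : TensorProduct D M ↥J, e ((f.lTensor M) w) ∈ idealToK J * s.star 1 := by
      intro w
      induction w using TensorProduct.induction_on with
      | zero => simp
      | tmul m j =>
          have : e ((f.lTensor M) (m ⊗ₜ[D] j)) = algebraMap D K (j : D) * (m : K) := by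
            simp only [hedef, hfdef, LinearMap.lTensor_tmul, LinearMap.coe_comp,
              LinearEquiv.coe_coe, Function.comp_apply, TensorProduct.rid_tmul,
              Submodule.coe_subtype, Submodule.subtype_apply]
            rw [Submodule.coe_smul, Algebra.smul_def]
          rw [this]
          exact Submodule.mul_mem_mul (mem_idealToK.mpr ⟨(j : D), j.2, rfl⟩) m.2
      | add w₁ w₂ h₁ h₂ =>
          rw [map_add, map_add]
          exact Submodule.add_mem _ h₁ h₂
    have : e ((f.lTensor M) z) = 1 := by
      rw [hz]; simp [hedef]; rfl
    rw [← this]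
    exact hrange z

lemma barStar_eq_star_of_fg (s : SemistarOp D K) (h : IsStarDomain s.star)
    (hflat : Module.Flat D ↥(s.star 1)) {F : Submodule D K} (hF : F ≠ ⊥) (hFG : F.FG) :
    barStar s F = s.star F := by
  apply le_antisymm
  · refine iSup₂_le fun J hJ => ?_
    obtain ⟨hJne, hJstar⟩ := hJ
    intro x hx
    rcases eq_or_ne x 0 with rfl | hx0
    · exact (s.star F).zero_mem
    have hJK : (idealToK J : Submodule D K) ≠ ⊥ := idealToK_ne_bot hJne
    have h1 : span D {x} * idealToK J ≤ F := by
      rw [Submodule.mul_le]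
      intro y hy z hz
      rw [Submodule.mem_span_singleton] at hy
      obtain ⟨c, rfl⟩ := hy
      have hxz := Submodule.mem_div_iff_forall_mul_mem.mp hx z hz
      simpa [smul_mul_assoc] using F.smul_mem c hxz
    have h2 : x ∈ span D {x} * s.star (idealToK J) := by
      have h1K : (1 : K) ∈ s.star (idealToK J) := by
        rw [hJstar]; exact one_mem_star_one s
      simpa using Submodule.mul_mem_mul (Submodule.mem_span_singleton_self x) h1K
    rw [← s.star_smul_mul x hx0 _ hJK] at h2
    exact s.star_mono _ _ (mul_ne_bot (span_singleton_ne_bot hx0) hJK) hF h1 h2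
  · intro x hx
    rcases eq_or_ne x 0 with rfl | hx0
    · exact (barStar s F).zero_mem
    obtain ⟨y, hyG, hy0⟩ := exists_ne_zero_mem_one_div (D := D) hFG
    set G : Submodule D K := (1 : Submodule D K) / F with hGdef
    have hG : G ≠ ⊥ := G.ne_bot_iff.mpr ⟨y, hyG, hy0⟩
    have hH : F * G ≠ ⊥ := mul_ne_bot hF hG
    have hstarH : s.star (F * G) = s.star 1 := h F hF hFG
    have hxG : ∀ g ∈ G, x * g ∈ s.star 1 := by
      intro g hg
      rcases eq_or_ne g 0 with rfl | hg0
      · simpa using (s.star 1).zero_mem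
      have h1 : g * x ∈ span D {g} * s.star F :=
        Submodule.mul_mem_mul (Submodule.mem_span_singleton_self g) hx
      rw [← s.star_smul_mul g hg0 F hF] at h1
      have h2 : span D {g} * F ≤ F * G := by
        rw [mul_comm F G]
        exact mul_le_mul' (Submodule.span_le.mpr (by simpa using hg)) le_rfl
      have h3 := s.star_mono _ _ (mul_ne_bot (span_singleton_ne_bot hg0) hF) hH h2 h1
      rw [hstarH] at h3
      rwa [mul_comm]
    set N : Ideal D := F.comap (LinearMap.toSpanSingleton D K x) with hNdef
    have hNmem : ∀ d : D, d ∈ N ↔ algebraMap D K d * x ∈ F := by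
      intro d
      simp [hNdef, LinearMap.toSpanSingleton_apply, Algebra.smul_def]
    have main : ∀ g ∈ G, ∃ Jg : Ideal D, Jg ≠ ⊥ ∧ ((1 : K) ∈ idealToK Jg * s.star 1) ∧
        idealToK Jg * (span D {g} * F) ≤ idealToK N := by
      intro g hg
      obtain ⟨Jg, hJg0, hJgt, hJg1⟩ := richman s hflat (hxG g hg)
      refine ⟨Jg, hJg0, hJg1, ?_⟩
      rw [Submodule.mul_le]
      rintro u hu z hz
      obtain ⟨d, hdJ, rfl⟩ := mem_idealToK.mp hu
      refine Submodule.mul_induction_on hz ?_ ?_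
      · rintro p hp f hf
        rw [Submodule.mem_span_singleton] at hp
        obtain ⟨r, rfl⟩ := hp
        have hgf : g * f ∈ (1 : Submodule D K) :=
          Submodule.mem_div_iff_forall_mul_mem.mp hg f hf
        obtain ⟨c, hc⟩ := Submodule.mem_one.mp hgf
        obtain ⟨d', hd'⟩ := Submodule.mem_one.mp (hJgt d hdJ)
        have hmem : d * c ∈ N := by
          rw [hNmem]
          have heq : algebraMap D K (d * c) * x = algebraMap D K d' * f := by
            calc algebraMap D K (d * c) * x
                = algebraMap D K d * algebraMap D K c * x := by rw [map_mul]
              _ = algebraMap D K d * (g * f) * x := by rw [hc]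
              _ = (algebraMap D K d * (x * g)) * f := by ring
              _ = algebraMap D K d' * f := by rw [hd']
          rw [heq]
          simpa [Algebra.smul_def] using F.smul_mem d' hf
        have heq2 : algebraMap D K d * (r • g * f) = r • algebraMap D K (d * c) := by
          rw [map_mul, hc, smul_mul_assoc, mul_smul_comm]
        rw [heq2]
        exact (idealToK N).smul_mem r (mem_idealToK.mpr ⟨d * c, hmem, rfl⟩)
      · intro z1 z2 h1 h2
        rw [mul_add]
        exact Submodule.add_mem _ h1 h2
    obtain ⟨f0, hf0F, hf00⟩ := F.ne_bot_iff.mp hF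
    have hNe : N ≠ ⊥ := by
      obtain ⟨J0, hJ00, _, hJ0le⟩ := main y hyG
      obtain ⟨d0, hd0J, hd00⟩ := J0.ne_bot_iff.mp hJ00
      have hmem : algebraMap D K d0 * (y * f0) ∈ idealToK N :=
        hJ0le (Submodule.mul_mem_mul (mem_idealToK.mpr ⟨d0, hd0J, rfl⟩)
          (Submodule.mul_mem_mul (Submodule.mem_span_singleton_self y) hf0F))
      obtain ⟨c, hcN, hc⟩ := mem_idealToK.mp hmem
      have hne : algebraMap D K d0 * (y * f0) ≠ 0 :=
        mul_ne_zero (by simpa [IsFractionRing.to_map_eq_zero_iff] using hd00)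
          (mul_ne_zero hy0 hf00)
      intro hbot
      rw [hbot, Submodule.mem_bot] at hcN
      rw [hcN, map_zero] at hc
      exact hne hc.symm
    have hNK : (idealToK N : Submodule D K) ≠ ⊥ := idealToK_ne_bot hNe
    have key : ∀ g ∈ G, ∀ f ∈ F, g * f ∈ s.star (idealToK N) := by
      intro g hgG f hf
      rcases eq_or_ne g 0 with rfl | hg0
      · simpa using (s.star (idealToK N)).zero_mem
      obtain ⟨Jg, hJg0, hJg1, hJgle⟩ := main g hgG
      have hB : span D {g} * F ≠ ⊥ := mul_ne_bot (span_singleton_ne_bot hg0) hF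
      have hJgK : (idealToK Jg : Submodule D K) ≠ ⊥ := idealToK_ne_bot hJg0
      have hBle : span D {g} * F ≤ s.star (idealToK N) := by
        calc span D {g} * F = 1 * (span D {g} * F) := (one_mul _).symm
          _ ≤ (idealToK Jg * s.star 1) * (span D {g} * F) :=
              mul_le_mul' (Submodule.one_le.mpr hJg1) le_rfl
          _ = (idealToK Jg * (span D {g} * F)) * s.star 1 := by ring
          _ ≤ s.star ((idealToK Jg * (span D {g} * F)) * 1) :=
              mul_star_le s (mul_ne_bot hJgK hB) one_ne_bot'
          _ = s.star (idealToK Jg * (span D {g} * F)) := by rw [mul_one]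
          _ ≤ s.star (idealToK N) :=
              s.star_mono _ _ (mul_ne_bot hJgK hB) hNK hJgle
      exact hBle (Submodule.mul_mem_mul (Submodule.mem_span_singleton_self g) hf)
    have hNstar : s.star (idealToK N) = s.star 1 := by
      apply le_antisymm
      · exact s.star_mono _ _ hNK one_ne_bot' (idealToK_le_one N)
      · rw [← hstarH]
        have hHle : F * G ≤ s.star (idealToK N) := by
          rw [Submodule.mul_le]
          intro f hf g hg
          rw [mul_comm]
          exact key g hg f hf
        have hmono := s.star_mono _ _ hH (star_ne_bot s hNK) hHle
        rwa [s.star_star _ hNK] at hmono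
    have hxdiv : x ∈ F / idealToK N := by
      rw [Submodule.mem_div_iff_forall_mul_mem]
      intro z hz
      obtain ⟨d, hdN, rfl⟩ := mem_idealToK.mp hz
      rw [mul_comm]
      exact (hNmem d).mp hdN
    have hNLS : N ∈ starLS s := ⟨hNe, hNstar⟩
    have hle : F / idealToK N ≤ barStar s F :=
      le_iSup₂ (f := fun (J : Ideal D) (_ : J ∈ starLS s) => F / idealToK J) N hNLS
    exact hle hxdiv


end Aux

theorem statement9 {D K : Type*} [CommRing D] [IsDomain D] [Field K] [Algebra D K]
    [IsFractionRing D K] (s : SemistarOp D K)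
    (h : IsStarDomain s.star) (hflat : Module.Flat D ↥(s.star 1)) :
    StarEq (finStar (barStar s)) (finStar s.star) := by
  intro E _
  exact iSup_congr fun F => iSup_congr fun hF =>
    barStar_eq_star_of_fg s h hflat hF.1 hF.2.1

end Semistar
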